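/- arXiv:2603.09008 — 2 statements merged into one kernel-verified Lean document; each statement's English description precedes it below -/
import Mathlib

section
/- Let a ∈ (0,1] be a constant. For each n, let π_n be a uniformly random permutation of [n] and define L_n^a = n − max_{1 ≤ i ≤ ⌊an⌋} π_n(i) + Σ_{i=1}^{⌊an⌋} 1(π_n(i) = i). Then for every integer ℓ ≥ 0, P(L_n^a = ℓ) → Σ_{j=0}^{ℓ} a(1−a)^j e^{−a} a^{ℓ−j} / (ℓ−j)! as n → ∞; that is, L_n^a converges in distribution to X + Y, where X and Y are independent, X is Poisson with mean a, and Y is geometric with P(Y = k) = a(1−a)^k for integers k ≥ 0. -/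
open MeasureTheory ProbabilityTheory Filter Finset Topology
open scoped NNReal

/-- Move card `c` to the top (position `0`) of the deck `π`
(where `π i` is the card in position `i`). -/
def moveToTop {n : ℕ} (c : Fin n) (π : Equiv.Perm (Fin n)) : Equiv.Perm (Fin n) :=
  π * ((π⁻¹ c).cycleRange)⁻¹

/-- The permutation (position `i` ↦ card in position `i`) obtained after performing
iterated random-to-top moves with selected cards `s 0, s 1, …`, starting from the
identity deck `(1, 2, …, n)`. -/
def rttPerm (n r : ℕ) (s : Fin r → Fin n) : Equiv.Perm (Fin n) :=
  (List.ofFn s).foldl (fun π c => moveToTop c π) 1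

/-- Number of fixed points of a permutation. -/
def fixedPointCount {n : ℕ} (π : Equiv.Perm (Fin n)) : ℕ :=
  (Finset.univ.filter fun i => π i = i).card

/-- Number of descents of a permutation. -/
def descentCount {n : ℕ} (π : Equiv.Perm (Fin n)) : ℕ :=
  (Finset.univ.filter fun p : Fin n × Fin n =>
    (p.1 : ℕ) + 1 = (p.2 : ℕ) ∧ π p.2 < π p.1).card

/-- Number of inversions of a permutation. -/
def inversionCount {n : ℕ} (π : Equiv.Perm (Fin n)) : ℕ :=
  (Finset.univ.filter fun p : Fin n × Fin n => p.1 < p.2 ∧ π p.2 < π p.1).card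

/-- The number of distinct values among `s 0, …, s (r-1)` (the occupancy count `K^r_n`). -/
def distinctCount (n r : ℕ) (s : Fin r → Fin n) : ℕ :=
  (Finset.univ.image s).card

/-- Probability of the event `p` under the uniform distribution on the finite type `α`. -/
noncomputable def unifProb {α : Type*} [Fintype α] (p : α → Prop) : ℝ :=
  (Nat.card {x : α // p x} : ℝ) / (Fintype.card α : ℝ)

/-- Expectation of `f` under the uniform distribution on the finite type `α`. -/
noncomputable def unifExpect {α : Type*} [Fintype α] (f : α → ℝ) : ℝ :=
  (∑ x, f x) / (Fintype.card α : ℝ)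

/-- Variance of `f` under the uniform distribution on the finite type `α`. -/
noncomputable def unifVar {α : Type*} [Fintype α] (f : α → ℝ) : ℝ :=
  unifExpect fun x => (f x - unifExpect f) ^ 2

/-- `max_{1 ≤ i ≤ k} π(i)`: the maximum card value (in `{1, …, n}`, i.e. `val + 1`)
among the first `k` positions of `π`. -/
def maxFirst (n k : ℕ) (π : Equiv.Perm (Fin n)) : ℕ :=
  (Finset.univ.filter fun i : Fin n => (i : ℕ) < k).sup fun i => (π i : ℕ) + 1

/-- The number of fixed points among the first `k` positions of `π`. -/
def fixedFirst (n k : ℕ) (π : Equiv.Perm (Fin n)) : ℕ :=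
  (Finset.univ.filter fun i : Fin n => (i : ℕ) < k ∧ π i = i).card

lemma unifProb_eq_card {n : ℕ} (p : Equiv.Perm (Fin n) → Prop) [DecidablePred p] :
    unifProb p = ((Finset.univ.filter p).card : ℝ) / (Nat.factorial n : ℝ) := by
  rw [unifProb, Nat.card_eq_fintype_card, Fintype.card_subtype]
  congr 2
  rw [Fintype.card_perm, Fintype.card_fin]

lemma card_filter_lt {n c : ℕ} (hc : c ≤ n) :
    ((Finset.univ.filter fun i : Fin n => (i : ℕ) < c).card) = c := by
  have h : (Finset.univ.filter fun i : Fin n => (i : ℕ) < c)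
      = (Finset.univ : Finset (Fin c)).map ⟨Fin.castLE hc, Fin.castLE_injective hc⟩ := by
    ext x
    simp only [Finset.mem_filter, Finset.mem_univ, true_and, Finset.mem_map,
      Function.Embedding.coeFn_mk]
    constructor
    · intro hx; exact ⟨⟨x, hx⟩, rfl⟩
    · rintro ⟨y, -, rfl⟩; exact y.isLt
  rw [h, Finset.card_map, Finset.card_univ, Fintype.card_fin]

lemma sieve_sum (s f : ℕ) :
    (∑ t ∈ range (s + 1), (-1 : ℤ) ^ (t + f) * (s.choose t) * (t.choose f))
      = if s = f then 1 else 0 := by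
  rcases lt_or_ge s f with h | h
  · rw [if_neg (by omega)]
    refine Finset.sum_eq_zero fun t ht => ?_
    simp only [Finset.mem_range] at ht
    rw [Nat.choose_eq_zero_of_lt (show t < f by omega)]
    simp
  · have hsplit : s + 1 = f + (s - f + 1) := by omega
    rw [hsplit, Finset.sum_range_add]
    have h1 : ∑ i ∈ range f, (-1 : ℤ) ^ (i + f) * (s.choose i) * (i.choose f) = 0 := by
      refine Finset.sum_eq_zero fun t ht => ?_
      simp only [Finset.mem_range] at ht
      rw [Nat.choose_eq_zero_of_lt (show t < f by omega)]
      simp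
    rw [h1, zero_add]
    have h2 : ∀ u ∈ range (s - f + 1), (-1 : ℤ) ^ (f + u + f) * (s.choose (f + u)) * ((f + u).choose f)
        = (s.choose f) * ((-1 : ℤ) ^ u * ((s - f).choose u)) := by
      intro u hu
      simp only [Finset.mem_range] at hu
      have hc : (s.choose (f + u)) * ((f + u).choose f) = (s.choose f) * ((s - f).choose u) := by
        have := Nat.choose_mul (n := s) (k := f + u) (s := f) (by omega)
        simpa using this
      have hsign : (-1 : ℤ) ^ (f + u + f) = (-1) ^ u := by
        rw [show f + u + f = u + 2 * f by ring, pow_add, pow_mul]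
        norm_num
      push_cast
      rw [hsign]
      rw [mul_assoc, ← Nat.cast_mul, hc]
      push_cast; ring
    rw [Finset.sum_congr rfl h2, ← Finset.mul_sum]
    have h3 : (∑ u ∈ range (s - f + 1), (-1 : ℤ) ^ u * ((s - f).choose u))
        = if s - f = 0 then 1 else 0 := Int.alternating_sum_range_choose
    rw [h3]
    rcases eq_or_ne s f with rfl | hne
    · simp
    · rw [if_neg (by omega), if_neg hne, mul_zero]


-- extension of an injective-on-s map to a permutation
lemma exists_perm_extend {n : ℕ} (s : Finset (Fin n)) (g : Fin n → Fin n)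
    (hg : Set.InjOn g s) : ∃ π : Equiv.Perm (Fin n), ∀ i ∈ s, π i = g i := by
  classical
  set t : Finset (Fin n) := s.image g with ht
  have hcard : t.card = s.card := Finset.card_image_of_injOn hg
  obtain ⟨e1, he1⟩ : ∃ e1 : {x : Fin n // x ∈ s} ≃ {x : Fin n // x ∈ t},
      ∀ x, (e1 x : Fin n) = g x := by
    have hbij : Function.Bijective
        (fun x : {x : Fin n // x ∈ s} => (⟨g x, Finset.mem_image_of_mem g x.2⟩ : {x : Fin n // x ∈ t})) := by
      rw [Fintype.bijective_iff_injective_and_card]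
      constructor
      · rintro ⟨x, hx⟩ ⟨y, hy⟩ hxy
        simp only [Subtype.mk.injEq] at hxy ⊢
        exact hg hx hy hxy
      · simp [Fintype.card_coe, hcard]
    exact ⟨Equiv.ofBijective _ hbij, fun x => rfl⟩
  have e2 : {x : Fin n // ¬ x ∈ s} ≃ {x : Fin n // ¬ x ∈ t} := by
    apply Fintype.equivOfCardEq
    rw [Fintype.card_subtype_compl, Fintype.card_subtype_compl]
    simp [Fintype.card_coe, hcard]
  refine ⟨((Equiv.sumCompl (· ∈ s)).symm.trans ((Equiv.sumCongr e1 e2).trans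
      (Equiv.sumCompl (· ∈ t)))), fun i hi => ?_⟩
  simp only [Equiv.trans_apply]
  rw [Equiv.sumCompl_symm_apply_of_pos hi]
  simp [he1]

-- number of permutations agreeing with a fixed permutation on a finset
lemma card_perm_agree {n : ℕ} (s : Finset (Fin n)) (π₀ : Equiv.Perm (Fin n)) :
    (Finset.univ.filter fun π : Equiv.Perm (Fin n) => ∀ i ∈ s, π i = π₀ i).card
      = (n - s.card).factorial := by
  classical
  -- first: the case π₀ = 1
  have base : (Finset.univ.filter fun π : Equiv.Perm (Fin n) => ∀ i ∈ s, π i = i).card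
      = (n - s.card).factorial := by
    rw [← Fintype.card_subtype]
    have e : {π : Equiv.Perm (Fin n) // ∀ i ∈ s, π i = i}
        ≃ Equiv.Perm {x : Fin n // ¬ x ∈ s} := by
      refine Equiv.trans ?_ (Equiv.Perm.subtypeEquivSubtypePerm (fun x => ¬ x ∈ s)).symm
      refine Equiv.subtypeEquiv (Equiv.refl _) ?_
      intro π
      simp only [Equiv.refl_apply]
      constructor
      · intro h a ha; exact h a (by simpa using ha)
      · intro h i hi; exact h i (by simpa using hi)
    rw [Fintype.card_congr e, Fintype.card_perm, Fintype.card_subtype_compl,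
      Fintype.card_fin, Fintype.card_coe]
  rw [← base]
  apply Finset.card_bij (fun π _ => π₀⁻¹ * π)
  · intro π hπ
    simp only [Finset.mem_filter, Finset.mem_univ, true_and] at hπ ⊢
    intro i hi
    simp [hπ i hi]
  · intro π hπ π' hπ' h
    exact mul_left_cancel h
  · intro τ hτ
    simp only [Finset.mem_filter, Finset.mem_univ, true_and] at hτ
    refine ⟨π₀ * τ, ?_, by group⟩
    simp only [Finset.mem_filter, Finset.mem_univ, true_and]
    intro i hi
    simp [hτ i hi]

-- counting injective functions from a finset-subtype into a finset
lemma card_inj_into {n : ℕ} (s t : Finset (Fin n)) :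
    (Finset.univ.filter fun φ : {i : Fin n // i ∈ s} → Fin n =>
        Function.Injective φ ∧ ∀ x, φ x ∈ t).card
      = t.card.descFactorial s.card := by
  classical
  rw [← Fintype.card_subtype]
  have e : {φ : {i : Fin n // i ∈ s} → Fin n // Function.Injective φ ∧ ∀ x, φ x ∈ t}
      ≃ ({i : Fin n // i ∈ s} ↪ {x : Fin n // x ∈ t}) := by
    refine ⟨fun φ => ⟨fun x => ⟨φ.1 x, φ.2.2 x⟩, ?_⟩, fun e => ⟨fun x => (e x).1, ?_, ?_⟩, ?_, ?_⟩
    · intro x y hxy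
      exact φ.2.1 (by simpa [Subtype.ext_iff] using hxy)
    · intro x y hxy
      exact e.injective (Subtype.ext hxy)
    · intro x; exact (e x).2
    · intro φ; rfl
    · intro e; rfl
  rw [Fintype.card_congr e, Fintype.card_embedding_eq, Fintype.card_coe, Fintype.card_coe]

lemma card_U {n k m : ℕ} (hk : k ≤ n) (hkm : k ≤ m) (hmn : m ≤ n) (A : Finset (Fin n))
    (hA : ∀ i ∈ A, (i : ℕ) < k) :
    (Finset.univ.filter fun π : Equiv.Perm (Fin n) =>
        (∀ i ∈ A, π i = i) ∧ ∀ i : Fin n, (i : ℕ) < k → (π i : ℕ) < m).card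
      = (m - A.card).descFactorial (k - A.card) * (n - k).factorial := by
  classical
  set Fk : Finset (Fin n) := Finset.univ.filter (fun i : Fin n => (i : ℕ) < k) with hFk
  set s : Finset (Fin n) := Fk \ A with hs
  set t : Finset (Fin n) :=
    (Finset.univ.filter fun x : Fin n => (x : ℕ) < m) \ A with htt
  have hAk : A ⊆ Fk := fun i hi => by simp [hFk, hA i hi]
  have hAm : A ⊆ Finset.univ.filter fun x : Fin n => (x : ℕ) < m := fun i hi => by
    simp [lt_of_lt_of_le (hA i hi) hkm]
  have hFkcard : Fk.card = k := card_filter_lt hk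
  have hscard : s.card = k - A.card := by
    rw [hs, Finset.card_sdiff_of_subset hAk, hFkcard]
  have htcard : t.card = m - A.card := by
    rw [htt, Finset.card_sdiff_of_subset hAm, card_filter_lt hmn]
  have hmem_s : ∀ x : Fin n, x ∈ s ↔ ((x : ℕ) < k ∧ x ∉ A) := by
    intro x; simp [hs, hFk]
  have hmem_t : ∀ x : Fin n, x ∈ t ↔ ((x : ℕ) < m ∧ x ∉ A) := by
    intro x; simp [htt]
  have hmap : ∀ π ∈ (Finset.univ.filter fun π : Equiv.Perm (Fin n) =>
      (∀ i ∈ A, π i = i) ∧ ∀ i : Fin n, (i : ℕ) < k → (π i : ℕ) < m),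
      (fun x : {i : Fin n // i ∈ s} => π x.1) ∈
        (Finset.univ.filter fun φ : {i : Fin n // i ∈ s} → Fin n =>
          Function.Injective φ ∧ ∀ x, φ x ∈ t) := by
    intro π hπ
    simp only [Finset.mem_filter, Finset.mem_univ, true_and] at hπ ⊢
    obtain ⟨hfix, hval⟩ := hπ
    refine ⟨?_, ?_⟩
    · intro x y hxy
      exact Subtype.ext (π.injective hxy)
    · intro x
      rw [hmem_t]
      have hxs := (hmem_s x.1).1 x.2
      refine ⟨hval x.1 hxs.1, ?_⟩
      intro hmem
      have hfx : π x.1 = x.1 := π.injective (hfix _ hmem)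
      exact hxs.2 (hfx ▸ hmem)
  rw [Finset.card_eq_sum_card_fiberwise hmap]
  have hfiber : ∀ φ ∈ (Finset.univ.filter fun φ : {i : Fin n // i ∈ s} → Fin n =>
      Function.Injective φ ∧ ∀ x, φ x ∈ t),
      ((Finset.univ.filter fun π : Equiv.Perm (Fin n) =>
        (∀ i ∈ A, π i = i) ∧ ∀ i : Fin n, (i : ℕ) < k → (π i : ℕ) < m).filter
          fun π => (fun x : {i : Fin n // i ∈ s} => π x.1) = φ).card
        = (n - k).factorial := by
    intro φ hφ
    simp only [Finset.mem_filter, Finset.mem_univ, true_and] at hφ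
    obtain ⟨hinj, hrange⟩ := hφ
    set g : Fin n → Fin n := fun i => if h : i ∈ s then φ ⟨i, h⟩ else i with hg
    have hg1 : ∀ (i : Fin n) (h : i ∈ s), g i = φ ⟨i, h⟩ := fun i h => dif_pos h
    have hg2 : ∀ (i : Fin n), i ∉ s → g i = i := fun i h => dif_neg h
    have hginj : Set.InjOn g Fk := by
      rintro x hx y hy hxy
      simp only [Finset.coe_filter, Set.mem_setOf_eq, Finset.mem_coe] at hx hy
      by_cases hxs : x ∈ s <;> by_cases hys : y ∈ s
      · rw [hg1 x hxs, hg1 y hys] at hxy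
        exact congrArg Subtype.val (hinj hxy)
      · exfalso
        have hyA : y ∈ A := by
          by_contra hyA
          exact hys ((hmem_s y).2 ⟨by simpa [hFk] using hy, hyA⟩)
        rw [hg1 x hxs, hg2 y hys] at hxy
        have := (hmem_t (φ ⟨x, hxs⟩)).1 (hrange ⟨x, hxs⟩)
        exact this.2 (hxy ▸ hyA)
      · exfalso
        have hxA : x ∈ A := by
          by_contra hxA
          exact hxs ((hmem_s x).2 ⟨by simpa [hFk] using hx, hxA⟩)
        rw [hg2 x hxs, hg1 y hys] at hxy
        have := (hmem_t (φ ⟨y, hys⟩)).1 (hrange ⟨y, hys⟩)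
        exact this.2 (hxy.symm ▸ hxA)
      · rw [hg2 x hxs, hg2 y hys] at hxy; exact hxy
    obtain ⟨π₀, hπ₀⟩ := exists_perm_extend Fk g hginj
    have hset : ((Finset.univ.filter fun π : Equiv.Perm (Fin n) =>
        (∀ i ∈ A, π i = i) ∧ ∀ i : Fin n, (i : ℕ) < k → (π i : ℕ) < m).filter
          fun π => (fun x : {i : Fin n // i ∈ s} => π x.1) = φ)
        = Finset.univ.filter fun π : Equiv.Perm (Fin n) => ∀ i ∈ Fk, π i = π₀ i := by
      ext π
      simp only [Finset.mem_filter, Finset.mem_univ, true_and]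
      constructor
      · rintro ⟨⟨hfix, hval⟩, hres⟩ i hi
        rw [hπ₀ i hi]
        by_cases hiA : i ∈ A
        · rw [hfix i hiA, hg2 i (fun hisa => ((hmem_s i).1 hisa).2 hiA)]
        · have his : i ∈ s := (hmem_s i).2 ⟨by simpa [hFk] using hi, hiA⟩
          rw [hg1 i his, ← hres]
      · intro hagree
        have hval : ∀ i : Fin n, (i : ℕ) < k → (π i : ℕ) < m := by
          intro i hik
          have hiFk : i ∈ Fk := by simp [hFk, hik]
          rw [hagree i hiFk, hπ₀ i hiFk]
          by_cases his : i ∈ s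
          · rw [hg1 i his]
            exact ((hmem_t _).1 (hrange ⟨i, his⟩)).1
          · rw [hg2 i his]
            exact lt_of_lt_of_le hik hkm
        refine ⟨⟨?_, hval⟩, ?_⟩
        · intro i hiA
          have hiFk : i ∈ Fk := hAk hiA
          rw [hagree i hiFk, hπ₀ i hiFk, hg2 i (fun hisa => ((hmem_s i).1 hisa).2 hiA)]
        · funext x
          have hxFk : x.1 ∈ Fk := Finset.sdiff_subset x.2
          rw [hagree x.1 hxFk, hπ₀ x.1 hxFk, hg1 x.1 x.2]
    rw [hset, card_perm_agree, hFkcard]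
  rw [Finset.sum_congr rfl hfiber, Finset.sum_const, card_inj_into, hscard, htcard,
    smul_eq_mul]

lemma sieve_indicator {n : ℕ} (k f : ℕ) (π : Equiv.Perm (Fin n)) :
    (if fixedFirst n k π = f then (1 : ℤ) else 0)
      = ∑ A ∈ (Finset.univ.filter fun i : Fin n => (i : ℕ) < k).powerset,
          (-1 : ℤ) ^ (A.card + f) * (A.card.choose f) *
            (if ∀ i ∈ A, π i = i then 1 else 0) := by
  classical
  set S := Finset.univ.filter (fun i : Fin n => (i : ℕ) < k ∧ π i = i) with hS
  have hsub : S ⊆ Finset.univ.filter fun i : Fin n => (i : ℕ) < k := by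
    intro i hi
    simp only [hS, Finset.mem_filter] at hi ⊢
    exact ⟨hi.1, hi.2.1⟩
  have hpow : S.powerset ⊆ (Finset.univ.filter fun i : Fin n => (i : ℕ) < k).powerset :=
    Finset.powerset_mono.2 hsub
  rw [← Finset.sum_subset hpow (by
    intro A hA hAS
    simp only [Finset.mem_powerset] at hA hAS
    have : ¬ (∀ i ∈ A, π i = i) := by
      intro hall
      exact hAS (fun i hi => by
        have hik := hA hi
        simp only [Finset.mem_filter] at hik
        simp only [hS, Finset.mem_filter]
        exact ⟨Finset.mem_univ _, hik.2, hall i hi⟩)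
    rw [if_neg this, mul_zero])]
  have hone : ∀ A ∈ S.powerset,
      (-1 : ℤ) ^ (A.card + f) * (A.card.choose f) * (if ∀ i ∈ A, π i = i then 1 else 0)
        = (-1 : ℤ) ^ (A.card + f) * (A.card.choose f) := by
    intro A hA
    simp only [Finset.mem_powerset] at hA
    rw [if_pos (fun i hi => by
      have := hA hi
      simp only [hS, Finset.mem_filter] at this
      exact this.2.2), mul_one]
  rw [Finset.sum_congr rfl hone,
    Finset.sum_powerset_apply_card (f := fun t => (-1 : ℤ) ^ (t + f) * (t.choose f))]
  have : ∀ t ∈ range (S.card + 1),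
      (S.card.choose t) • ((-1 : ℤ) ^ (t + f) * (t.choose f))
        = (-1 : ℤ) ^ (t + f) * (S.card.choose t) * (t.choose f) := by
    intro t ht
    rw [nsmul_eq_mul]
    ring
  rw [Finset.sum_congr rfl this, sieve_sum]
  rw [fixedFirst, ← hS]

lemma exact_count {n k j f : ℕ} (hk : k ≤ n) (hj : j + 1 ≤ n - k) :
    (((Finset.univ.filter fun π : Equiv.Perm (Fin n) =>
        maxFirst n k π = n - j ∧ fixedFirst n k π = f).card : ℤ))
      = ∑ m ∈ range (k + 1), (-1 : ℤ) ^ (m + f) * (m.choose f) * (k.choose m) *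
          ((k - m) * ((n - j - 1 - m).descFactorial (k - 1 - m)) * (n - k).factorial) := by
  classical
  have hmax_le : ∀ (π : Equiv.Perm (Fin n)) (x : ℕ),
      maxFirst n k π ≤ x ↔ ∀ i : Fin n, (i : ℕ) < k → (π i : ℕ) < x := by
    intro π x
    rw [maxFirst, Finset.sup_le_iff]
    constructor
    · intro h i hi
      have := h i (by simp [hi]); omega
    · intro h i hi
      simp only [Finset.mem_filter] at hi
      have := h i hi.2; omega
  -- card as a sum of indicators
  rw [Finset.card_filter]
  push_cast
  have hsplit : ∀ π : Equiv.Perm (Fin n),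
      (if maxFirst n k π = n - j ∧ fixedFirst n k π = f then (1 : ℤ) else 0)
        = (if maxFirst n k π = n - j then (1 : ℤ) else 0) *
          (if fixedFirst n k π = f then (1 : ℤ) else 0) := by
    intro π
    by_cases h1 : maxFirst n k π = n - j <;> by_cases h2 : fixedFirst n k π = f <;>
      simp [h1, h2]
  rw [Finset.sum_congr rfl (fun π _ => hsplit π)]
  have hsieve : ∀ π : Equiv.Perm (Fin n),
      (if maxFirst n k π = n - j then (1 : ℤ) else 0) *
          (if fixedFirst n k π = f then (1 : ℤ) else 0)
        = ∑ A ∈ (Finset.univ.filter fun i : Fin n => (i : ℕ) < k).powerset,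
            (-1 : ℤ) ^ (A.card + f) * (A.card.choose f) *
              ((if maxFirst n k π = n - j then (1 : ℤ) else 0) *
                (if ∀ i ∈ A, π i = i then 1 else 0)) := by
    intro π
    rw [sieve_indicator k f π, Finset.mul_sum]
    exact Finset.sum_congr rfl fun A _ => by ring
  rw [Finset.sum_congr rfl (fun π _ => hsieve π), Finset.sum_comm]
  have hinner : ∀ A ∈ (Finset.univ.filter fun i : Fin n => (i : ℕ) < k).powerset,
      (∑ π : Equiv.Perm (Fin n), (-1 : ℤ) ^ (A.card + f) * (A.card.choose f) *
          ((if maxFirst n k π = n - j then (1 : ℤ) else 0) *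
            (if ∀ i ∈ A, π i = i then 1 else 0)))
        = (-1 : ℤ) ^ (A.card + f) * (A.card.choose f) *
            ((k - A.card) * ((n - j - 1 - A.card).descFactorial (k - 1 - A.card))
              * (n - k).factorial) := by
    intro A hA
    simp only [Finset.mem_powerset] at hA
    have hAlt : ∀ i ∈ A, (i : ℕ) < k := fun i hi => by
      have := hA hi; simp only [Finset.mem_filter] at this; exact this.2
    rw [← Finset.mul_sum]
    congr 1
    -- ∑ π ind(max = n-j)·ind(A fixed) = count difference
    have hcount : (∑ π : Equiv.Perm (Fin n),
        ((if maxFirst n k π = n - j then (1 : ℤ) else 0) *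
          (if ∀ i ∈ A, π i = i then 1 else 0)))
        = ((Finset.univ.filter fun π : Equiv.Perm (Fin n) =>
            maxFirst n k π = n - j ∧ ∀ i ∈ A, π i = i).card : ℤ) := by
      rw [Finset.card_filter]
      push_cast
      exact Finset.sum_congr rfl fun π _ => by
        by_cases h1 : maxFirst n k π = n - j <;> by_cases h2 : ∀ i ∈ A, π i = i <;>
          simp [h1, h2]
    rw [hcount]
    -- difference of two U-counts
    have hUeq : ∀ x : ℕ, k ≤ x → x ≤ n →
        (Finset.univ.filter fun π : Equiv.Perm (Fin n) =>
            (∀ i ∈ A, π i = i) ∧ ∀ i : Fin n, (i : ℕ) < k → (π i : ℕ) < x).card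
          = (x - A.card).descFactorial (k - A.card) * (n - k).factorial :=
      fun x h1 h2 => card_U hk h1 h2 A hAlt
    have key : (Finset.univ.filter fun π : Equiv.Perm (Fin n) =>
          (∀ i ∈ A, π i = i) ∧ ∀ i : Fin n, (i : ℕ) < k → (π i : ℕ) < n - j).card
        = (Finset.univ.filter fun π : Equiv.Perm (Fin n) =>
            maxFirst n k π = n - j ∧ ∀ i ∈ A, π i = i).card
          + (Finset.univ.filter fun π : Equiv.Perm (Fin n) =>
              (∀ i ∈ A, π i = i) ∧ ∀ i : Fin n, (i : ℕ) < k → (π i : ℕ) < n - j - 1).card := by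
      have hpred : ∀ π : Equiv.Perm (Fin n),
          (((∀ i ∈ A, π i = i) ∧ ∀ i : Fin n, (i : ℕ) < k → (π i : ℕ) < n - j)) ↔
          ((maxFirst n k π = n - j ∧ ∀ i ∈ A, π i = i) ∨
            ((∀ i ∈ A, π i = i) ∧ ∀ i : Fin n, (i : ℕ) < k → (π i : ℕ) < n - j - 1)) := by
        intro π
        constructor
        · rintro ⟨hfix, hval⟩
          by_cases hlow : maxFirst n k π ≤ n - j - 1
          · exact Or.inr ⟨hfix, fun i hi => (hmax_le π (n - j - 1)).1 hlow i hi⟩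
          · have h1 : maxFirst n k π ≤ n - j := (hmax_le π (n - j)).2 hval
            exact Or.inl ⟨by omega, hfix⟩
        · rintro (⟨hmax, hfix⟩ | ⟨hfix, hval⟩)
          · exact ⟨hfix, fun i hi => (hmax_le π (n - j)).1 (le_of_eq hmax) i hi⟩
          · exact ⟨hfix, fun i hi => by have := hval i hi; omega⟩
      rw [Finset.filter_congr (fun π _ => by rw [hpred π]), Finset.filter_or,
        Finset.card_union_of_disjoint]
      rw [Finset.disjoint_filter]
      rintro π - ⟨hmax, hfix⟩ ⟨-, hval⟩
      have := (hmax_le π (n - j - 1)).2 hval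
      omega
    have e1 := hUeq (n - j) (by omega) (by omega)
    have e2 := hUeq (n - j - 1) (by omega) (by omega)
    have hAn : A.card ≤ k := by
      calc A.card ≤ (Finset.univ.filter fun i : Fin n => (i : ℕ) < k).card :=
            Finset.card_le_card hA
        _ = k := card_filter_lt hk
    -- descFactorial difference identity
    have desc_diff : ∀ N u : ℕ, (N + 1).descFactorial (u + 1)
        = N.descFactorial (u + 1) + (u + 1) * N.descFactorial u := by
      intro N u
      rw [Nat.succ_descFactorial_succ, Nat.descFactorial_succ]
      rcases le_or_gt u N with h | h
      · rw [← Nat.add_mul]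
        congr 1
        omega
      · rw [Nat.descFactorial_eq_zero_iff_lt.2 h]
        simp
    have hdiff : (n - j - A.card).descFactorial (k - A.card)
        = (n - j - 1 - A.card).descFactorial (k - A.card)
          + (k - A.card) * ((n - j - 1 - A.card).descFactorial (k - 1 - A.card)) := by
      rcases Nat.eq_zero_or_pos (k - A.card) with hu | hu
      · simp [hu]
      · have h1 : n - j - A.card = (n - j - 1 - A.card) + 1 := by omega
        have h2 : k - A.card = (k - 1 - A.card) + 1 := by omega
        rw [h1, h2, desc_diff]
    have : ((Finset.univ.filter fun π : Equiv.Perm (Fin n) =>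
        maxFirst n k π = n - j ∧ ∀ i ∈ A, π i = i).card : ℤ)
        = ((n - j - A.card).descFactorial (k - A.card) * (n - k).factorial : ℕ)
          - ((n - j - 1 - A.card).descFactorial (k - A.card) * (n - k).factorial : ℕ) := by
      rw [← e1, ← e2, key]
      push_cast
      ring
    rw [this, hdiff]
    push_cast [Nat.cast_sub hAn]
    ring
  rw [Finset.sum_congr rfl hinner,
    Finset.sum_powerset_apply_card
      (f := fun t => (-1 : ℤ) ^ (t + f) * (t.choose f) *
        ((k - t) * ((n - j - 1 - t).descFactorial (k - 1 - t)) * (n - k).factorial)),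
    card_filter_lt hk]
  exact Finset.sum_congr rfl fun m _ => by rw [nsmul_eq_mul]; ring

lemma maxFirst_le {n k : ℕ} (π : Equiv.Perm (Fin n)) : maxFirst n k π ≤ n := by
  rw [maxFirst, Finset.sup_le_iff]
  intro i _
  have := (π i).isLt
  omega

lemma maxFirst_all {n : ℕ} (hn : 1 ≤ n) (π : Equiv.Perm (Fin n)) : maxFirst n n π = n := by
  refine le_antisymm (maxFirst_le π) ?_
  rw [maxFirst]
  have hb : π.symm ⟨n - 1, by omega⟩ ∈ Finset.univ.filter (fun i : Fin n => (i : ℕ) < n) := by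
    rw [Finset.mem_filter]
    exact ⟨Finset.mem_univ _, (π.symm ⟨n - 1, by omega⟩).isLt⟩
  have := Finset.le_sup (f := fun i : Fin n => (π i : ℕ) + 1) hb
  simp only [Equiv.apply_symm_apply] at this
  omega

lemma exact_count_fix {n : ℕ} (f : ℕ) :
    ((Finset.univ.filter fun π : Equiv.Perm (Fin n) => fixedFirst n n π = f).card : ℤ)
      = ∑ m ∈ range (n + 1), (-1 : ℤ) ^ (m + f) * (m.choose f) * (n.choose m)
          * (n - m).factorial := by
  classical
  rw [Finset.card_filter]
  push_cast
  rw [Finset.sum_congr rfl (fun π _ => sieve_indicator n f π), Finset.sum_comm]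
  have hinner : ∀ A ∈ (Finset.univ.filter fun i : Fin n => (i : ℕ) < n).powerset,
      (∑ π : Equiv.Perm (Fin n), (-1 : ℤ) ^ (A.card + f) * (A.card.choose f) *
          (if ∀ i ∈ A, π i = i then 1 else 0))
        = (-1 : ℤ) ^ (A.card + f) * (A.card.choose f) * (n - A.card).factorial := by
    intro A _
    rw [← Finset.mul_sum]
    congr 1
    have : (∑ π : Equiv.Perm (Fin n), (if ∀ i ∈ A, π i = i then (1 : ℤ) else 0))
        = ((Finset.univ.filter fun π : Equiv.Perm (Fin n) => ∀ i ∈ A, π i = i).card : ℤ) := by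
      rw [Finset.card_filter]
      push_cast
      rfl
    rw [this]
    have := card_perm_agree A (1 : Equiv.Perm (Fin n))
    simp only [Equiv.Perm.coe_one, id] at this
    norm_cast
  rw [Finset.sum_congr rfl hinner,
    Finset.sum_powerset_apply_card
      (f := fun t => (-1 : ℤ) ^ (t + f) * (t.choose f) * (n - t).factorial),
    card_filter_lt (le_refl n)]
  exact Finset.sum_congr rfl fun m _ => by rw [nsmul_eq_mul]; ring


lemma tendsto_nat_ratio {u v : ℕ → ℕ} {b c : ℝ}
    (hu : Tendsto (fun n : ℕ => (u n : ℝ) / n) atTop (𝓝 b))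
    (hv : Tendsto (fun n : ℕ => (v n : ℝ) / n) atTop (𝓝 c)) (hc : c ≠ 0) :
    Tendsto (fun n : ℕ => (u n : ℝ) / (v n : ℝ)) atTop (𝓝 (b / c)) := by
  refine (hu.div hv hc).congr' ?_
  filter_upwards [eventually_gt_atTop 0] with n hn
  rcases eq_or_ne ((v n : ℝ)) 0 with h0 | h0
  · simp [h0]
  · have hn' : (n : ℝ) ≠ 0 := Nat.cast_ne_zero.2 hn.ne'
    rw [Pi.div_apply]
    field_simp

lemma tendsto_floor_div (a : ℝ) (ha : 0 < a) :
    Tendsto (fun n : ℕ => ((⌊a * n⌋₊ : ℕ) : ℝ) / n) atTop (𝓝 a) := by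
  have hlow : Tendsto (fun n : ℕ => a - 1 / (n : ℝ)) atTop (𝓝 a) := by
    have h2 := (tendsto_const_nhds (x := a) (f := (atTop : Filter ℕ))).sub
      tendsto_one_div_atTop_nhds_zero_nat
    simpa using h2
  refine tendsto_of_tendsto_of_tendsto_of_le_of_le' hlow tendsto_const_nhds ?_ ?_
  · filter_upwards [eventually_gt_atTop 0] with n hn
    have hnp : (0 : ℝ) < n := by exact_mod_cast hn
    have h1 : a * n - 1 < (⌊a * n⌋₊ : ℝ) := Nat.sub_one_lt_floor (a * n)
    have h2 : (a * n - 1) / n ≤ (⌊a * n⌋₊ : ℝ) / n := by gcongr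
    calc a - 1 / (n : ℝ) = (a * n - 1) / n := by field_simp
      _ ≤ _ := h2
  · filter_upwards [eventually_gt_atTop 0] with n hn
    have hnp : (0 : ℝ) < n := by exact_mod_cast hn
    have h1 : (⌊a * n⌋₊ : ℝ) ≤ a * n := Nat.floor_le (by positivity)
    calc (⌊a * n⌋₊ : ℝ) / n ≤ a * n / n := by gcongr
      _ = a := by field_simp

-- numerator-type limits
lemma tendsto_sub_div (w : ℕ → ℕ) (b : ℝ) (c : ℕ)
    (hw : Tendsto (fun n : ℕ => (w n : ℝ) / n) atTop (𝓝 b))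
    (hev : ∀ᶠ n : ℕ in atTop, c ≤ w n) :
    Tendsto (fun n : ℕ => ((w n - c : ℕ) : ℝ) / n) atTop (𝓝 b) := by
  have h0 : Tendsto (fun n : ℕ => (w n : ℝ) / n - c / n) atTop (𝓝 (b - 0)) :=
    hw.sub (by simpa [div_eq_mul_inv] using tendsto_one_div_atTop_nhds_zero_nat.const_mul (c : ℝ))
  rw [sub_zero] at h0
  refine h0.congr' ?_
  filter_upwards [hev] with n hn
  rw [Nat.cast_sub hn, sub_div]

section facts
variable (a : ℝ)

lemma floor_le_self {n : ℕ} (ha' : a ≤ 1) : ⌊a * n⌋₊ ≤ n := by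
  rcases le_or_gt a 0 with h | h
  · have h0 : a * n ≤ 0 := by
      have : (0 : ℝ) ≤ n := Nat.cast_nonneg n
      nlinarith
    simp [Nat.floor_of_nonpos h0]
  · have h1 : a * n ≤ (n : ℝ) := by
      have : (0 : ℝ) ≤ n := Nat.cast_nonneg n
      nlinarith
    have h2 : ⌊a * n⌋₊ ≤ ⌊(n : ℝ)⌋₊ := Nat.floor_le_floor h1
    rwa [Nat.floor_natCast] at h2

lemma ev_le_floor (ha : 0 < a) (c : ℕ) : ∀ᶠ n : ℕ in atTop, c ≤ ⌊a * n⌋₊ := by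
  have h1 : Tendsto (fun n : ℕ => a * n) atTop atTop :=
    Tendsto.const_mul_atTop ha tendsto_natCast_atTop_atTop
  filter_upwards [h1.eventually_ge_atTop (c : ℝ)] with n hn
  exact Nat.le_floor hn

lemma ev_le_n (c : ℕ) : ∀ᶠ n : ℕ in atTop, c ≤ (fun n : ℕ => n) n :=
  eventually_ge_atTop c

lemma tendsto_id_div : Tendsto (fun n : ℕ => ((n : ℕ) : ℝ) / n) atTop (𝓝 1) := by
  refine tendsto_const_nhds.congr' ?_
  filter_upwards [eventually_gt_atTop 0] with n hn
  have : (n : ℝ) ≠ 0 := Nat.cast_ne_zero.2 hn.ne'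
  rw [div_self this]

lemma fact1 (ha : 0 < a) (c c' : ℕ) :
    Tendsto (fun n : ℕ => ((⌊a * n⌋₊ - c : ℕ) : ℝ) / ((n - c' : ℕ) : ℝ)) atTop (𝓝 a) := by
  have h := tendsto_nat_ratio
    (tendsto_sub_div (fun n => ⌊a * n⌋₊) a c (tendsto_floor_div a ha) (ev_le_floor a ha c))
    (tendsto_sub_div (fun n => n) 1 c' tendsto_id_div (eventually_ge_atTop c')) one_ne_zero
  simpa using h

lemma tendsto_compl_div (ha : 0 < a) (ha' : a ≤ 1) :
    Tendsto (fun n : ℕ => ((n - ⌊a * n⌋₊ : ℕ) : ℝ) / n) atTop (𝓝 (1 - a)) := by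
  have h := (tendsto_id_div).sub (tendsto_floor_div a ha)
  refine h.congr ?_
  intro n
  rw [Nat.cast_sub (floor_le_self a ha'), sub_div]

lemma ev_le_compl (ha : 0 < a) (haa : a < 1) (c : ℕ) :
    ∀ᶠ n : ℕ in atTop, c ≤ n - ⌊a * n⌋₊ := by
  have h1 : Tendsto (fun n : ℕ => (1 - a) * n) atTop atTop :=
    Tendsto.const_mul_atTop (by linarith) tendsto_natCast_atTop_atTop
  filter_upwards [h1.eventually_ge_atTop (c : ℝ)] with n hn
  have h2 : (c : ℝ) ≤ ((n - ⌊a * n⌋₊ : ℕ) : ℝ) := by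
    rw [Nat.cast_sub (floor_le_self a haa.le)]
    have := Nat.floor_le (show 0 ≤ a * n by positivity)
    nlinarith
  exact_mod_cast h2

lemma fact2 (ha : 0 < a) (haa : a < 1) (c c' : ℕ) :
    Tendsto (fun n : ℕ => ((n - ⌊a * n⌋₊ - c : ℕ) : ℝ) / ((n - c' : ℕ) : ℝ)) atTop
      (𝓝 (1 - a)) := by
  have h := tendsto_nat_ratio
    (tendsto_sub_div (fun n => n - ⌊a * n⌋₊) (1 - a) c (tendsto_compl_div a ha haa.le)
      (ev_le_compl a ha haa c))
    (tendsto_sub_div (fun n => n) 1 c' tendsto_id_div (eventually_ge_atTop c')) one_ne_zero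
  simpa using h
end facts

/-- numerator of the m-th term of the exact formula -/
def rnum (k n j f m : ℕ) : ℕ :=
  m.choose f * (k.choose m * ((k - m) * (n - j - 1 - m).descFactorial (k - 1 - m)))

noncomputable def rterm (a : ℝ) (j f : ℕ) (n m : ℕ) : ℝ :=
  (-1 : ℝ) ^ (m + f) * (rnum ⌊a * n⌋₊ n j f m : ℝ)
    / ((n.descFactorial ⌊a * n⌋₊ : ℕ) : ℝ)

noncomputable def gterm (a : ℝ) (j f : ℕ) (m : ℕ) : ℝ :=
  (-1 : ℝ) ^ (m + f) * (m.choose f) * (a ^ (m + 1) * (1 - a) ^ j) / m.factorial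

lemma cast_descFactorial_prod (N u : ℕ) :
    ((N.descFactorial u : ℕ) : ℝ) = ∏ i ∈ range u, ((N - i : ℕ) : ℝ) := by
  rw [Nat.descFactorial_eq_prod_range]
  push_cast
  rfl

lemma descF_split {n k m : ℕ} (hm : m + 1 ≤ k) :
    (n - 1 - m).descFactorial (k - 1 - m) * n.descFactorial (m + 1) = n.descFactorial k := by
  have h := Nat.descFactorial_mul_descFactorial (n := n) (k := m + 1) (m := k) hm
  have h1 : n - (m + 1) = n - 1 - m := by omega
  have h2 : k - (m + 1) = k - 1 - m := by omega
  rwa [h1, h2] at h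

lemma descF_swap {n k m j : ℕ} (hm : m + 1 ≤ k) (hk : k ≤ n) :
    (n - j - 1 - m).descFactorial (k - 1 - m) * (n - 1 - m).descFactorial j
      = (n - k).descFactorial j * (n - 1 - m).descFactorial (k - 1 - m) := by
  have e4 := Nat.descFactorial_mul_descFactorial (n := n - 1 - m) (k := j)
    (m := j + (k - 1 - m)) (Nat.le_add_right _ _)
  have e5 := Nat.descFactorial_mul_descFactorial (n := n - 1 - m) (k := k - 1 - m)
    (m := (k - 1 - m) + j) (Nat.le_add_right _ _)
  have h1 : n - 1 - m - j = n - j - 1 - m := by omega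
  have h2 : j + (k - 1 - m) - j = k - 1 - m := by omega
  have h3 : n - 1 - m - (k - 1 - m) = n - k := by omega
  have h4 : (k - 1 - m) + j - (k - 1 - m) = j := by omega
  rw [h1, h2] at e4
  rw [h3, h4] at e5
  rw [e4, Nat.add_comm j (k - 1 - m)]
  exact e5.symm

lemma rnum_nat_identity {n k j m : ℕ} (hm : m + 1 ≤ k) (hk : k ≤ n) :
    k.descFactorial (m + 1) * ((n - k).descFactorial j) * n.descFactorial k
      = m.factorial * (k.choose m * ((k - m) * ((n - j - 1 - m).descFactorial (k - 1 - m))))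
        * (n.descFactorial (m + 1) * ((n - 1 - m).descFactorial j)) := by
  have e1 : m.factorial * k.choose m = k.descFactorial m :=
    (Nat.descFactorial_eq_factorial_mul_choose k m).symm
  have e2 : (k - m) * k.descFactorial m = k.descFactorial (m + 1) :=
    (Nat.descFactorial_succ k m).symm
  have key : m.factorial * (k.choose m * ((k - m)
      * ((n - j - 1 - m).descFactorial (k - 1 - m))))
      = k.descFactorial (m + 1) * ((n - j - 1 - m).descFactorial (k - 1 - m)) := by
    rw [← e2, ← e1]; ring
  rw [key]
  have e6 := descF_swap (n := n) (k := k) (m := m) (j := j) hm hk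
  calc k.descFactorial (m + 1) * ((n - k).descFactorial j) * n.descFactorial k
      = k.descFactorial (m + 1) * ((n - k).descFactorial j)
          * ((n - 1 - m).descFactorial (k - 1 - m) * n.descFactorial (m + 1)) := by
        rw [descF_split hm]
    _ = k.descFactorial (m + 1)
          * ((n - k).descFactorial j * (n - 1 - m).descFactorial (k - 1 - m))
          * n.descFactorial (m + 1) := by ring
    _ = k.descFactorial (m + 1)
          * ((n - j - 1 - m).descFactorial (k - 1 - m) * (n - 1 - m).descFactorial j)
          * n.descFactorial (m + 1) := by rw [e6]
    _ = _ := by ring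

lemma tendsto_rterm (a : ℝ) (ha : 0 < a) (haa : a < 1) (j f m : ℕ) :
    Tendsto (fun n : ℕ => rterm a j f n m) atTop (𝓝 (gterm a j f m)) := by
  have hprod : Tendsto (fun n : ℕ =>
      (-1 : ℝ) ^ (m + f) * (m.choose f) * (1 / m.factorial)
        * ((∏ i ∈ range (m + 1), ((⌊a * n⌋₊ - i : ℕ) : ℝ) / ((n - i : ℕ) : ℝ))
          * (∏ i ∈ range j, ((n - ⌊a * n⌋₊ - i : ℕ) : ℝ) / ((n - (1 + m + i) : ℕ) : ℝ))))
      atTop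
      (𝓝 ((-1 : ℝ) ^ (m + f) * (m.choose f) * (1 / m.factorial)
        * ((∏ _i ∈ range (m + 1), a) * (∏ _i ∈ range j, (1 - a))))) := by
    apply Tendsto.const_mul
    exact Tendsto.mul
      (tendsto_finset_prod _ fun i _ => fact1 a ha i i)
      (tendsto_finset_prod _ fun i _ => fact2 a ha haa i (1 + m + i))
  rw [Finset.prod_const, Finset.prod_const, Finset.card_range, Finset.card_range] at hprod
  have hlim_eq : (-1 : ℝ) ^ (m + f) * (m.choose f) * (1 / m.factorial)
      * (a ^ (m + 1) * (1 - a) ^ j) = gterm a j f m := by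
    rw [gterm]; ring
  rw [hlim_eq] at hprod
  refine hprod.congr' ?_
  filter_upwards [ev_le_floor a ha (m + 1 + j + 1), ev_le_compl a ha haa (j + 1),
    eventually_ge_atTop (m + j + 2)] with n hkbig hcompl hn
  set k := ⌊a * n⌋₊ with hkdef
  have hkn : k ≤ n := floor_le_self a haa.le
  have hm1k : m + 1 ≤ k := by omega
  have hjn : j + 1 ≤ n - k := by omega
  have hp1 : (∏ i ∈ range (m + 1), ((k - i : ℕ) : ℝ) / ((n - i : ℕ) : ℝ))
      = ((k.descFactorial (m + 1) : ℕ) : ℝ) / ((n.descFactorial (m + 1) : ℕ) : ℝ) := by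
    rw [cast_descFactorial_prod, cast_descFactorial_prod, ← Finset.prod_div_distrib]
  have hp2 : (∏ i ∈ range j, ((n - k - i : ℕ) : ℝ) / ((n - (1 + m + i) : ℕ) : ℝ))
      = (((n - k).descFactorial j : ℕ) : ℝ) / (((n - 1 - m).descFactorial j : ℕ) : ℝ) := by
    rw [cast_descFactorial_prod, cast_descFactorial_prod, ← Finset.prod_div_distrib]
    apply Finset.prod_congr rfl
    intro i _
    congr 2
    omega
  rw [hp1, hp2, rterm, rnum]
  have hd1 : ((n.descFactorial (m + 1) : ℕ) : ℝ) ≠ 0 := by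
    rw [Nat.cast_ne_zero]
    intro h0
    exact absurd (Nat.descFactorial_eq_zero_iff_lt.1 h0) (by omega)
  have hd2 : (((n - 1 - m).descFactorial j : ℕ) : ℝ) ≠ 0 := by
    rw [Nat.cast_ne_zero]
    intro h0
    exact absurd (Nat.descFactorial_eq_zero_iff_lt.1 h0) (by omega)
  have hden : ((n.descFactorial k : ℕ) : ℝ) ≠ 0 := by
    rw [Nat.cast_ne_zero]
    intro h0
    exact absurd (Nat.descFactorial_eq_zero_iff_lt.1 h0) (by omega)
  have hmf : ((m.factorial : ℕ) : ℝ) ≠ 0 := by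
    exact_mod_cast (Nat.factorial_pos m).ne'
  have hfrac : (1 / (m.factorial : ℝ))
      * (((k.descFactorial (m + 1) : ℕ) : ℝ) / ((n.descFactorial (m + 1) : ℕ) : ℝ)
        * ((((n - k).descFactorial j : ℕ) : ℝ) / (((n - 1 - m).descFactorial j : ℕ) : ℝ)))
      = ((k.choose m * ((k - m) * ((n - j - 1 - m).descFactorial (k - 1 - m))) : ℕ) : ℝ)
        / ((n.descFactorial k : ℕ) : ℝ) := by
    rw [div_mul_div_comm, div_mul_div_comm, one_mul]
    rw [div_eq_div_iff (by positivity) hden]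
    have hreal := congrArg (fun x : ℕ => (x : ℝ)) (rnum_nat_identity (n := n) (j := j) hm1k hkn)
    push_cast at hreal ⊢
    linear_combination hreal
  calc (-1 : ℝ) ^ (m + f) * (m.choose f) * (1 / m.factorial)
      * (((k.descFactorial (m + 1) : ℕ) : ℝ) / ((n.descFactorial (m + 1) : ℕ) : ℝ)
        * ((((n - k).descFactorial j : ℕ) : ℝ) / (((n - 1 - m).descFactorial j : ℕ) : ℝ)))
      = (-1 : ℝ) ^ (m + f) * (m.choose f) * ((1 / (m.factorial : ℝ))
        * (((k.descFactorial (m + 1) : ℕ) : ℝ) / ((n.descFactorial (m + 1) : ℕ) : ℝ)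
          * ((((n - k).descFactorial j : ℕ) : ℝ)
            / (((n - 1 - m).descFactorial j : ℕ) : ℝ)))) := by ring
    _ = (-1 : ℝ) ^ (m + f) * (m.choose f)
        * (((k.choose m * ((k - m) * ((n - j - 1 - m).descFactorial (k - 1 - m))) : ℕ) : ℝ)
          / ((n.descFactorial k : ℕ) : ℝ)) := by rw [hfrac]
    _ = _ := by push_cast; ring

lemma rterm_bound (a : ℝ) (ha' : a ≤ 1) (j f n m : ℕ) :
    |rterm a j f n m| ≤ (m.choose f : ℝ) / (m.factorial : ℝ) := by
  set k := ⌊a * n⌋₊ with hkdef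
  have hkn : k ≤ n := floor_le_self a ha'
  have hden0 : (0 : ℕ) < n.descFactorial k := by
    rcases Nat.eq_zero_or_pos (n.descFactorial k) with h | h
    · exact absurd (Nat.descFactorial_eq_zero_iff_lt.1 h) (by omega)
    · exact h
  have habs : |rterm a j f n m|
      = (rnum k n j f m : ℝ) / ((n.descFactorial k : ℕ) : ℝ) := by
    rw [rterm, abs_div, abs_mul, abs_pow, abs_neg, abs_one, one_pow, one_mul,
      abs_of_nonneg (by positivity), abs_of_nonneg (by positivity)]
  rw [habs, div_le_div_iff₀ (by exact_mod_cast hden0) (by positivity)]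
  have hnat : rnum k n j f m * m.factorial ≤ m.choose f * n.descFactorial k := by
    rw [rnum]
    have hinner : (k.choose m * ((k - m) * ((n - j - 1 - m).descFactorial (k - 1 - m))))
        * m.factorial ≤ n.descFactorial k := by
      rcases le_or_gt k m with hkm | hmk
      · rcases eq_or_lt_of_le hkm with rfl | hlt
        · simp [Nat.sub_self]
        · rw [Nat.choose_eq_zero_of_lt hlt]
          simp
      · have hm1k : m + 1 ≤ k := hmk
        have h1 : m.factorial * k.choose m * (k - m) = k.descFactorial (m + 1) := by
          rw [Nat.descFactorial_succ, ← Nat.descFactorial_eq_factorial_mul_choose]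
          ring
        have h2 : k.descFactorial (m + 1) ≤ n.descFactorial (m + 1) :=
          Nat.descFactorial_le (m + 1) hkn
        have h3 : (n - j - 1 - m).descFactorial (k - 1 - m)
            ≤ (n - 1 - m).descFactorial (k - 1 - m) :=
          Nat.descFactorial_le (k - 1 - m) (by omega)
        calc (k.choose m * ((k - m) * ((n - j - 1 - m).descFactorial (k - 1 - m))))
            * m.factorial
            = (m.factorial * k.choose m * (k - m))
              * ((n - j - 1 - m).descFactorial (k - 1 - m)) := by ring
          _ = k.descFactorial (m + 1) * ((n - j - 1 - m).descFactorial (k - 1 - m)) := by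
              rw [h1]
          _ ≤ n.descFactorial (m + 1) * ((n - 1 - m).descFactorial (k - 1 - m)) :=
              Nat.mul_le_mul h2 h3
          _ = n.descFactorial k := by
              rw [Nat.mul_comm, descF_split hm1k]
    calc m.choose f * (k.choose m * ((k - m) * ((n - j - 1 - m).descFactorial (k - 1 - m))))
        * m.factorial
        = m.choose f * ((k.choose m * ((k - m)
            * ((n - j - 1 - m).descFactorial (k - 1 - m)))) * m.factorial) := by ring
      _ ≤ m.choose f * n.descFactorial k := Nat.mul_le_mul_left _ hinner
  exact_mod_cast hnat

lemma summable_bnd (f : ℕ) : Summable (fun m : ℕ => (m.choose f : ℝ) / (m.factorial : ℝ)) := by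
  have hbase : Summable (fun m : ℕ => (1 : ℝ) / (m.factorial : ℝ)) := by
    have := Real.summable_pow_div_factorial 1
    refine this.congr fun m => ?_
    rw [one_pow]
  have hshift : Summable (fun m : ℕ => (1 : ℝ) / ((m - f).factorial : ℝ)) := by
    rw [← summable_nat_add_iff f]
    refine hbase.congr fun m => ?_
    rw [Nat.add_sub_cancel]
  refine Summable.of_nonneg_of_le (fun m => by positivity) (fun m => ?_) hshift
  rcases le_or_gt f m with hfm | hmf
  · rw [div_le_div_iff₀ (by positivity) (by positivity)]
    have : m.choose f * (m - f).factorial ≤ m.factorial := by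
      have hid := Nat.choose_mul_factorial_mul_factorial hfm
      calc m.choose f * (m - f).factorial ≤ m.choose f * f.factorial * (m - f).factorial :=
            by
              have := Nat.one_le_iff_ne_zero.2 (Nat.factorial_pos f).ne'
              nlinarith [Nat.factorial_pos f, Nat.choose_pos hfm,
                Nat.factorial_pos (m - f)]
        _ = m.factorial := hid
    rw [one_mul]
    exact_mod_cast this
  · rw [Nat.choose_eq_zero_of_lt hmf]
    simp only [Nat.cast_zero, zero_div]
    positivity

lemma hasSum_gterm (a : ℝ) (j f : ℕ) :
    HasSum (gterm a j f)
      (a * (1 - a) ^ j * (Real.exp (-a) * a ^ f / (f.factorial : ℝ))) := by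
  have h0 : HasSum (fun s : ℕ => (-a) ^ s / (s.factorial : ℝ)) (Real.exp (-a)) := by
    rw [Real.exp_eq_exp_ℝ]
    exact NormedSpace.expSeries_div_hasSum_exp (-a)
  have h1 := h0.mul_left (a ^ (f + 1) * (1 - a) ^ j / (f.factorial : ℝ))
  have h2 : ∀ s : ℕ, (a ^ (f + 1) * (1 - a) ^ j / (f.factorial : ℝ))
      * ((-a) ^ s / (s.factorial : ℝ)) = gterm a j f (s + f) := by
    intro s
    rw [gterm]
    have hch : (((s + f).choose f : ℕ) : ℝ) * ((f.factorial : ℝ) * (s.factorial : ℝ))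
        = ((s + f).factorial : ℝ) := by
      have hid := Nat.choose_mul_factorial_mul_factorial (Nat.le_add_left f s)
      have hsub : s + f - f = s := by omega
      rw [hsub] at hid
      have := congrArg (fun x : ℕ => (x : ℝ)) hid
      push_cast at this
      linear_combination this
    have hsign : (-1 : ℝ) ^ (s + f + f) = (-1) ^ s := by
      rw [show s + f + f = s + 2 * f by ring, pow_add, pow_mul]
      norm_num
    have hneg : (-a) ^ s = (-1 : ℝ) ^ s * a ^ s := by
      rw [neg_pow]
    rw [hsign, hneg]
    have hf0 : (f.factorial : ℝ) ≠ 0 := by exact_mod_cast (Nat.factorial_pos f).ne'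
    have hs0 : (s.factorial : ℝ) ≠ 0 := by exact_mod_cast (Nat.factorial_pos s).ne'
    have hC0 : (((s + f).choose f : ℕ) : ℝ) ≠ 0 := by
      exact_mod_cast (Nat.choose_pos (Nat.le_add_left f s)).ne'
    rw [← hch]
    field_simp
    ring
  rw [funext h2] at h1
  have hzero : (∑ i ∈ range f, gterm a j f i) = 0 := by
    refine Finset.sum_eq_zero fun i hi => ?_
    simp only [Finset.mem_range] at hi
    rw [gterm, Nat.choose_eq_zero_of_lt hi]
    simp
  refine (hasSum_nat_add_iff' (f := gterm a j f) f).1 ?_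
  rw [hzero, sub_zero]
  have heq : a ^ (f + 1) * (1 - a) ^ j / (f.factorial : ℝ) * Real.exp (-a)
      = a * (1 - a) ^ j * (Real.exp (-a) * a ^ f / (f.factorial : ℝ)) := by
    have hf0 : (f.factorial : ℝ) ≠ 0 := by exact_mod_cast (Nat.factorial_pos f).ne'
    field_simp
    ring
  rwa [heq] at h1

lemma unifProb_eq_tsum (a : ℝ) (ha' : a ≤ 1) (j f : ℕ) {n : ℕ}
    (hj : j + 1 ≤ n - ⌊a * n⌋₊) :
    unifProb (fun π : Equiv.Perm (Fin n) =>
        maxFirst n ⌊a * n⌋₊ π = n - j ∧ fixedFirst n ⌊a * n⌋₊ π = f)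
      = ∑' m, rterm a j f n m := by
  classical
  set k := ⌊a * n⌋₊ with hkdef
  have hk : k ≤ n := floor_le_self a ha'
  rw [unifProb_eq_card]
  have hc := exact_count (n := n) (k := k) (j := j) (f := f) hk hj
  have hcr := congrArg (fun x : ℤ => (x : ℝ)) hc
  push_cast at hcr
  rw [hcr, Finset.sum_div]
  have hfac : (n.factorial : ℝ) = ((n - k).factorial : ℝ) * ((n.descFactorial k : ℕ) : ℝ) := by
    exact_mod_cast (Nat.factorial_mul_descFactorial hk).symm
  have hnk0 : ((n - k).factorial : ℝ) ≠ 0 := by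
    exact_mod_cast (Nat.factorial_pos (n - k)).ne'
  have hden0 : ((n.descFactorial k : ℕ) : ℝ) ≠ 0 := by
    rw [Nat.cast_ne_zero]
    intro h0
    exact absurd (Nat.descFactorial_eq_zero_iff_lt.1 h0) (by omega)
  have hterm : ∀ m ∈ range (k + 1),
      (-1 : ℝ) ^ (m + f) * (m.choose f) * (k.choose m)
          * (((k : ℝ) - (m : ℝ)) * (((n - j - 1 - m).descFactorial (k - 1 - m) : ℕ) : ℝ)
            * ((n - k).factorial : ℝ)) / (n.factorial : ℝ)
        = rterm a j f n m := by
    intro m hm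
    simp only [Finset.mem_range] at hm
    have hmk : m ≤ k := by omega
    rw [rterm, rnum, hfac, ← hkdef]
    push_cast [Nat.cast_sub hmk]
    field_simp
  rw [Finset.sum_congr rfl hterm]
  refine (tsum_eq_sum ?_).symm
  intro m hm
  simp only [Finset.mem_range, not_lt] at hm
  rw [rterm, rnum, Nat.choose_eq_zero_of_lt (by omega : k < m)]
  simp

lemma tendsto_Pj (a : ℝ) (ha : 0 < a) (haa : a < 1) (j f : ℕ) :
    Tendsto (fun n : ℕ => unifProb (fun π : Equiv.Perm (Fin n) =>
        maxFirst n ⌊a * n⌋₊ π = n - j ∧ fixedFirst n ⌊a * n⌋₊ π = f)) atTop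
      (𝓝 (a * (1 - a) ^ j * (Real.exp (-a) * a ^ f / (f.factorial : ℝ)))) := by
  have hdom := tendsto_tsum_of_dominated_convergence (𝓕 := (atTop : Filter ℕ))
      (f := fun n m => rterm a j f n m) (g := gterm a j f)
      (bound := fun m => (m.choose f : ℝ) / (m.factorial : ℝ))
      (summable_bnd f) (fun m => tendsto_rterm a ha haa j f m)
      (Eventually.of_forall fun n m => by
        simpa using rterm_bound a haa.le j f n m)
  rw [(hasSum_gterm a j f).tsum_eq] at hdom
  refine hdom.congr' ?_
  filter_upwards [ev_le_compl a ha haa (j + 1)] with n hn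
  exact (unifProb_eq_tsum a haa.le j f hn).symm

noncomputable def qterm (f n m : ℕ) : ℝ :=
  (-1 : ℝ) ^ (m + f) * ((m.choose f * (n.choose m * (n - m).factorial) : ℕ) : ℝ)
    / (n.factorial : ℝ)

lemma unifProb_false {α : Type*} [Fintype α] (p : α → Prop) (h : ∀ x, ¬ p x) :
    unifProb p = 0 := by
  rw [unifProb]
  have : IsEmpty {x : α // p x} := ⟨fun x => h x x.2⟩
  rw [Nat.card_of_isEmpty]
  simp

lemma floor_one_n (n : ℕ) : ⌊(1 : ℝ) * n⌋₊ = n := by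
  rw [one_mul, Nat.floor_natCast]

lemma unifProb_eq_tsum_one (f : ℕ) {n : ℕ} (hn : 1 ≤ n) :
    unifProb (fun π : Equiv.Perm (Fin n) =>
        maxFirst n ⌊(1 : ℝ) * n⌋₊ π = n - 0 ∧ fixedFirst n ⌊(1 : ℝ) * n⌋₊ π = f)
      = ∑' m, qterm f n m := by
  classical
  rw [unifProb_eq_card]
  have hpred : ∀ π : Equiv.Perm (Fin n),
      (maxFirst n ⌊(1 : ℝ) * n⌋₊ π = n - 0 ∧ fixedFirst n ⌊(1 : ℝ) * n⌋₊ π = f)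
        ↔ fixedFirst n n π = f := by
    intro π
    rw [floor_one_n]
    constructor
    · rintro ⟨-, h2⟩; exact h2
    · intro h; exact ⟨by rw [maxFirst_all hn, Nat.sub_zero], h⟩
  rw [Finset.filter_congr (fun π _ => hpred π)]
  have hc := exact_count_fix (n := n) f
  have hcr := congrArg (fun x : ℤ => (x : ℝ)) hc
  push_cast at hcr
  rw [hcr, Finset.sum_div]
  have hterm : ∀ m ∈ range (n + 1),
      (-1 : ℝ) ^ (m + f) * (m.choose f) * (n.choose m) * ((n - m).factorial : ℝ)
          / (n.factorial : ℝ)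
        = qterm f n m := by
    intro m _
    rw [qterm]
    push_cast
    ring
  rw [Finset.sum_congr rfl hterm]
  refine (tsum_eq_sum ?_).symm
  intro m hm
  simp only [Finset.mem_range, not_lt] at hm
  rw [qterm, Nat.choose_eq_zero_of_lt (by omega : n < m)]
  simp

lemma qterm_bound (f n m : ℕ) :
    |qterm f n m| ≤ (m.choose f : ℝ) / (m.factorial : ℝ) := by
  have hf0 : (0 : ℝ) < (n.factorial : ℝ) := by exact_mod_cast Nat.factorial_pos n
  have habs : |qterm f n m|
      = ((m.choose f * (n.choose m * (n - m).factorial) : ℕ) : ℝ) / (n.factorial : ℝ) := by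
    rw [qterm, abs_div, abs_mul, abs_pow, abs_neg, abs_one, one_pow, one_mul,
      abs_of_nonneg (by positivity), abs_of_nonneg (by positivity)]
  rw [habs, div_le_div_iff₀ hf0 (by positivity)]
  have hnat : m.choose f * (n.choose m * (n - m).factorial) * m.factorial
      ≤ m.choose f * n.factorial := by
    have hinner : n.choose m * (n - m).factorial * m.factorial ≤ n.factorial := by
      rcases le_or_gt m n with hmn | hnm
      · have heq : n.choose m * (n - m).factorial * m.factorial = n.factorial := by
          calc n.choose m * (n - m).factorial * m.factorial
              = n.choose m * m.factorial * (n - m).factorial := by ring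
            _ = n.factorial := Nat.choose_mul_factorial_mul_factorial hmn
        exact heq.le
      · rw [Nat.choose_eq_zero_of_lt hnm]
        simp
    calc m.choose f * (n.choose m * (n - m).factorial) * m.factorial
        = m.choose f * (n.choose m * (n - m).factorial * m.factorial) := by ring
      _ ≤ m.choose f * n.factorial := Nat.mul_le_mul_left _ hinner
  exact_mod_cast hnat

lemma tendsto_qterm (f m : ℕ) :
    Tendsto (fun n : ℕ => qterm f n m) atTop (𝓝 (gterm 1 0 f m)) := by
  have hconst : gterm 1 0 f m
      = (-1 : ℝ) ^ (m + f) * (m.choose f) * (1 / m.factorial) := by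
    rw [gterm]
    norm_num
    ring
  rw [hconst]
  refine tendsto_const_nhds.congr' ?_
  filter_upwards [eventually_ge_atTop m] with n hn
  have hid : n.choose m * m.factorial * (n - m).factorial = n.factorial :=
    Nat.choose_mul_factorial_mul_factorial hn
  have hm0 : (m.factorial : ℝ) ≠ 0 := by exact_mod_cast (Nat.factorial_pos m).ne'
  have hn0 : (n.factorial : ℝ) ≠ 0 := by exact_mod_cast (Nat.factorial_pos n).ne'
  rw [qterm]
  have hidr : (n.choose m : ℝ) * (m.factorial : ℝ) * ((n - m).factorial : ℝ)
      = (n.factorial : ℝ) := by exact_mod_cast hid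
  push_cast
  rw [← hidr]
  have hc0 : (n.choose m : ℝ) ≠ 0 := by exact_mod_cast (Nat.choose_pos hn).ne'
  have hnm0 : ((n - m).factorial : ℝ) ≠ 0 := by
    exact_mod_cast (Nat.factorial_pos (n - m)).ne'
  field_simp

lemma tendsto_P0_one (f : ℕ) :
    Tendsto (fun n : ℕ => unifProb (fun π : Equiv.Perm (Fin n) =>
        maxFirst n ⌊(1 : ℝ) * n⌋₊ π = n - 0 ∧ fixedFirst n ⌊(1 : ℝ) * n⌋₊ π = f)) atTop
      (𝓝 ((1 : ℝ) * (1 - 1) ^ 0 * (Real.exp (-1) * 1 ^ f / (f.factorial : ℝ)))) := by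
  have hdom := tendsto_tsum_of_dominated_convergence (𝓕 := (atTop : Filter ℕ))
      (f := fun n m => qterm f n m) (g := gterm 1 0 f)
      (bound := fun m => (m.choose f : ℝ) / (m.factorial : ℝ))
      (summable_bnd f) (fun m => tendsto_qterm f m)
      (Eventually.of_forall fun n m => by simpa using qterm_bound f n m)
  rw [(hasSum_gterm 1 0 f).tsum_eq] at hdom
  refine hdom.congr' ?_
  filter_upwards [eventually_ge_atTop 1] with n hn
  exact (unifProb_eq_tsum_one f hn).symm

lemma tendsto_Pj_one (j f : ℕ) (hj : j ≠ 0) :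
    Tendsto (fun n : ℕ => unifProb (fun π : Equiv.Perm (Fin n) =>
        maxFirst n ⌊(1 : ℝ) * n⌋₊ π = n - j ∧ fixedFirst n ⌊(1 : ℝ) * n⌋₊ π = f)) atTop
      (𝓝 ((1 : ℝ) * (1 - 1) ^ j * (Real.exp (-1) * 1 ^ f / (f.factorial : ℝ)))) := by
  have hz : (1 : ℝ) * (1 - 1) ^ j * (Real.exp (-1) * 1 ^ f / (f.factorial : ℝ)) = 0 := by
    rw [sub_self, zero_pow hj]
    ring
  rw [hz]
  refine tendsto_const_nhds.congr' ?_
  filter_upwards [eventually_ge_atTop (j + 1)] with n hn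
  refine (unifProb_false _ fun π h => ?_).symm
  rw [floor_one_n] at h
  have := maxFirst_all (by omega) π
  omega

lemma decomp {n : ℕ} (k ℓ : ℕ) (hn : ℓ < n) :
    (Finset.univ.filter fun π : Equiv.Perm (Fin n) =>
        n - maxFirst n k π + fixedFirst n k π = ℓ).card
      = ∑ j ∈ range (ℓ + 1), (Finset.univ.filter fun π : Equiv.Perm (Fin n) =>
          maxFirst n k π = n - j ∧ fixedFirst n k π = ℓ - j).card := by
  classical
  rw [Finset.card_eq_sum_card_fiberwise (f := fun π => n - maxFirst n k π)
    (t := range (ℓ + 1)) (fun π hπ => by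
      simp only [Finset.mem_coe, Finset.mem_filter] at hπ
      simp only [Finset.mem_coe, Finset.mem_range]
      omega)]
  refine Finset.sum_congr rfl fun j hj => ?_
  simp only [Finset.mem_range] at hj
  rw [Finset.filter_filter]
  congr 1
  apply Finset.filter_congr
  intro π _
  have hM : maxFirst n k π ≤ n := maxFirst_le π
  constructor
  · rintro ⟨h1, h2⟩
    constructor <;> omega
  · rintro ⟨h1, h2⟩
    constructor <;> omega

/-- **Proposition (deterministically indexed model).** For a constant `a ∈ (0, 1]` and a
uniformly random permutation `π` of `[n]`, the statistic
`Lₙᵃ = n - max_{1 ≤ i ≤ ⌊an⌋} π(i) + Σ_{i=1}^{⌊an⌋} 1(π(i) = i)` satisfies, for every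
`ℓ ≥ 0`, `P(Lₙᵃ = ℓ) → Σ_{j=0}^{ℓ} a(1-a)^j e⁻ᵃ a^{ℓ-j}/(ℓ-j)!`; i.e. `Lₙᵃ` converges in
distribution to an independent sum of a `Poisson(a)` and a geometric with parameter `a`. -/
theorem uniform_perm_poisson_geometric (a : ℝ) (ha : 0 < a) (ha' : a ≤ 1) (ℓ : ℕ) :
    Tendsto
      (fun n : ℕ =>
        unifProb (fun π : Equiv.Perm (Fin n) =>
          n - maxFirst n ⌊a * (n : ℝ)⌋₊ π + fixedFirst n ⌊a * (n : ℝ)⌋₊ π = ℓ))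
      atTop
      (𝓝 (∑ j ∈ Finset.range (ℓ + 1),
        a * (1 - a) ^ j * (Real.exp (-a) * a ^ (ℓ - j) / (Nat.factorial (ℓ - j) : ℝ)))) := by
  classical
  have hterm : ∀ j ∈ range (ℓ + 1),
      Tendsto (fun n : ℕ => unifProb (fun π : Equiv.Perm (Fin n) =>
          maxFirst n ⌊a * n⌋₊ π = n - j ∧ fixedFirst n ⌊a * n⌋₊ π = ℓ - j)) atTop
        (𝓝 (a * (1 - a) ^ j * (Real.exp (-a) * a ^ (ℓ - j) / ((ℓ - j).factorial : ℝ)))) := by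
    intro j hj
    rcases lt_or_eq_of_le ha' with haa | rfl
    · exact tendsto_Pj a ha haa j (ℓ - j)
    · rcases Nat.eq_zero_or_pos j with rfl | hjpos
      · exact tendsto_P0_one (ℓ - 0)
      · exact tendsto_Pj_one j (ℓ - j) (by omega)
  have hsum := tendsto_finset_sum (range (ℓ + 1)) hterm
  refine hsum.congr' ?_
  filter_upwards [eventually_gt_atTop ℓ] with n hn
  have hcards := decomp (n := n) ⌊a * n⌋₊ ℓ hn
  have hsum_eq : ∑ j ∈ range (ℓ + 1), unifProb (fun π : Equiv.Perm (Fin n) =>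
      maxFirst n ⌊a * n⌋₊ π = n - j ∧ fixedFirst n ⌊a * n⌋₊ π = ℓ - j)
      = ∑ j ∈ range (ℓ + 1), (((Finset.univ.filter fun π : Equiv.Perm (Fin n) =>
          maxFirst n ⌊a * n⌋₊ π = n - j ∧ fixedFirst n ⌊a * n⌋₊ π = ℓ - j).card : ℝ)
            / (n.factorial : ℝ)) :=
    Finset.sum_congr rfl fun j _ => unifProb_eq_card _
  rw [hsum_eq, ← Finset.sum_div, unifProb_eq_card]
  congr 1
  rw [hcards]
  push_cast
  rfl
end

section
/- Let n ≥ 2 and r ≥ 0 be integers, and let I^r_n be the number of inversions of the random permutation of [n] obtained by performing r iterated random-to-top shuffles starting from the identity. Then E[I^r_n] = (1/2) · C(n,2) · (1 − ((n−2)/n)^r), where C(n,2) = n(n−1)/2. -/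
open MeasureTheory ProbabilityTheory Filter Finset Topology
open scoped NNReal

lemma coe_cycleRange_ne {m : ℕ} {i j : Fin (m + 1)} (h : j ≠ i) :
    (i.cycleRange j : ℕ) = if j < i then (j : ℕ) + 1 else (j : ℕ) := by
  rcases lt_or_gt_of_ne h with h' | h'
  · rw [if_pos h', Fin.coe_cycleRange_of_lt h']
  · rw [if_neg (asymm h'), Fin.cycleRange_of_gt h']

lemma cycleRange_pos {m : ℕ} {i j : Fin (m + 1)} (h : j ≠ i) : 0 < i.cycleRange j := by
  refine Fin.pos_iff_ne_zero.2 (fun h0 => ?_)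
  exact h (i.cycleRange.injective (h0.trans (Fin.cycleRange_self i).symm))

lemma cycleRange_lt_cycleRange {m : ℕ} {i j k : Fin (m + 1)} (hj : j ≠ i) (hk : k ≠ i) :
    i.cycleRange j < i.cycleRange k ↔ j < k := by
  rw [Fin.lt_iff_val_lt_val, Fin.lt_iff_val_lt_val, coe_cycleRange_ne hj, coe_cycleRange_ne hk]
  simp only [Fin.lt_iff_val_lt_val]
  have hj' : (j : ℕ) ≠ (i : ℕ) := fun h => hj (Fin.val_injective h)
  have hk' : (k : ℕ) ≠ (i : ℕ) := fun h => hk (Fin.val_injective h)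
  split_ifs <;> omega

lemma moveToTop_inv_apply {n : ℕ} (c : Fin n) (π : Equiv.Perm (Fin n)) (x : Fin n) :
    (moveToTop c π)⁻¹ x = (π⁻¹ c).cycleRange (π⁻¹ x) := by
  simp [moveToTop, mul_inv_rev, Equiv.Perm.mul_apply]

lemma step_order {m : ℕ} (c a b : Fin (m + 1)) (hab : a ≠ b) (π : Equiv.Perm (Fin (m + 1))) :
    ((moveToTop c π)⁻¹ b < (moveToTop c π)⁻¹ a) ↔
      (c = b ∨ (c ≠ a ∧ c ≠ b ∧ π⁻¹ b < π⁻¹ a)) := by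
  rw [moveToTop_inv_apply, moveToTop_inv_apply]
  rcases eq_or_ne c b with rfl | hcb
  · have ha : π⁻¹ a ≠ π⁻¹ c := fun h => hab (π⁻¹.injective h)
    rw [Fin.cycleRange_self]
    simp only [true_or, iff_true]
    exact cycleRange_pos ha
  · rcases eq_or_ne c a with rfl | hca
    · have hb : π⁻¹ b ≠ π⁻¹ c := fun h => hcb (π⁻¹.injective h).symm
      rw [Fin.cycleRange_self]
      refine iff_of_false (Fin.not_lt_zero _) ?_
      simp [hcb]
    · have hb : π⁻¹ b ≠ π⁻¹ c := fun h => hcb (π⁻¹.injective h).symm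
      have ha : π⁻¹ a ≠ π⁻¹ c := fun h => hca (π⁻¹.injective h).symm
      rw [cycleRange_lt_cycleRange hb ha]
      simp [hcb, hca]

lemma rttPerm_snoc (n r : ℕ) (s : Fin r → Fin n) (c : Fin n) :
    rttPerm n (r + 1) (Fin.snoc s c) = moveToTop c (rttPerm n r s) := by
  unfold rttPerm
  rw [List.ofFn_succ']
  simp [List.foldl_concat]

lemma sum_indicator_eq (m : ℕ) (a b : Fin (m + 1)) (hab : a < b) (r : ℕ) :
    ∑ s : Fin r → Fin (m + 1),
        (if (rttPerm (m + 1) r s)⁻¹ b < (rttPerm (m + 1) r s)⁻¹ a then (1 : ℝ) else 0) =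
      (((m : ℝ) + 1) ^ r - ((m : ℝ) - 1) ^ r) / 2 := by
  induction r with
  | zero => simp [rttPerm, asymm hab]
  | succ r ih =>
      have hab' : a ≠ b := ne_of_lt hab
      rw [← Fintype.sum_equiv (Fin.snocEquiv fun _ => Fin (m + 1))
        (fun p => if (rttPerm (m + 1) (r + 1) (Fin.snoc p.2 p.1))⁻¹ b <
            (rttPerm (m + 1) (r + 1) (Fin.snoc p.2 p.1))⁻¹ a then (1 : ℝ) else 0)
        _ (fun p => rfl)]
      rw [Fintype.sum_prod_type, Finset.sum_comm]
      have step : ∀ s' : Fin r → Fin (m + 1),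
          (∑ c : Fin (m + 1), if (rttPerm (m + 1) (r + 1) (Fin.snoc s' c))⁻¹ b <
              (rttPerm (m + 1) (r + 1) (Fin.snoc s' c))⁻¹ a then (1 : ℝ) else 0) =
            ((m : ℝ) - 1) * (if (rttPerm (m + 1) r s')⁻¹ b < (rttPerm (m + 1) r s')⁻¹ a
              then (1 : ℝ) else 0) + 1 := by
        intro s'
        set π := rttPerm (m + 1) r s' with hπ
        have hrw : ∀ c : Fin (m + 1),
            ((rttPerm (m + 1) (r + 1) (Fin.snoc s' c))⁻¹ b <
              (rttPerm (m + 1) (r + 1) (Fin.snoc s' c))⁻¹ a) =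
            (c = b ∨ (c ≠ a ∧ c ≠ b ∧ π⁻¹ b < π⁻¹ a)) := by
          intro c
          rw [rttPerm_snoc]
          exact propext (step_order c a b hab' π)
        simp only [hrw]
        by_cases hQ : π⁻¹ b < π⁻¹ a
        · simp only [hQ, and_true, if_pos]
          have hcond : ∀ c : Fin (m + 1), (c = b ∨ (c ≠ a ∧ c ≠ b)) ↔ ¬(c = a) := by
            intro c
            constructor
            · rintro (rfl | ⟨h, _⟩) h'
              · exact hab' h'.symm
              · exact h h'
            · intro h
              rcases eq_or_ne c b with rfl | h2
              · exact Or.inl rfl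
              · exact Or.inr ⟨h, h2⟩
          simp only [hcond]
          rw [Finset.sum_boole]
          rw [Finset.filter_not]
          simp [Finset.filter_eq', Finset.card_sdiff]
        · simp only [hQ, and_false, or_false, if_neg]
          simp [Finset.sum_ite_eq']
      rw [Finset.sum_congr rfl fun s' _ => step s']
      rw [Finset.sum_add_distrib, ← Finset.mul_sum, ih, Finset.sum_const]
      simp only [Finset.card_univ, nsmul_eq_mul, mul_one]
      have hcard : (Fintype.card (Fin r → Fin (m + 1)) : ℝ) = ((m : ℝ) + 1) ^ r := by
        simp
      rw [hcard, pow_succ, pow_succ]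
      ring

lemma card_pairs (n : ℕ) :
    (Finset.univ.filter fun p : Fin n × Fin n => p.1 < p.2).card = n.choose 2 := by
  rw [Nat.choose_two_right, Finset.card_filter, Fintype.sum_prod_type_right]
  have hfib : ∀ b : Fin n, (∑ a : Fin n, if a < b then 1 else 0) = (b : ℕ) := by
    intro b
    rw [← Finset.card_filter]
    have : Finset.univ.filter (fun a : Fin n => a < b) = Finset.Iio b := by
      ext a; simp
    rw [this, Fin.card_Iio]
  rw [Finset.sum_congr rfl fun b _ => hfib b, Fin.sum_univ_eq_sum_range (fun i => i) n,
    Finset.sum_range_id]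

/-- **Proposition (expected number of inversions).** For `n ≥ 2` and `r ≥ 0`, the expected
number of inversions after `r` iterated random-to-top shuffles is
`(1/2)·C(n,2)·(1 - ((n-2)/n)^r)`. -/
theorem rtt_expected_inversions (n r : ℕ) (hn : 2 ≤ n) :
    unifExpect (fun s : Fin r → Fin n => (inversionCount (rttPerm n r s) : ℝ)) =
      (Nat.choose n 2 : ℝ) / 2 * (1 - (((n : ℝ) - 2) / n) ^ r) := by
  classical
  obtain ⟨m, rfl⟩ : ∃ m, n = m + 1 := ⟨n - 1, by omega⟩
  have h1 : ∀ π : Equiv.Perm (Fin (m + 1)), (inversionCount π : ℝ) =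
      ∑ p : Fin (m + 1) × Fin (m + 1),
        if p.1 < p.2 ∧ π⁻¹ p.2 < π⁻¹ p.1 then (1 : ℝ) else 0 := by
    intro π
    rw [inversionCount, Finset.card_filter]
    push_cast
    exact (Fintype.sum_equiv ((Equiv.prodComm _ _).trans (Equiv.prodCongr π.symm π.symm))
      _ _ (fun p => by
        simp [Equiv.Perm.inv_def, Equiv.apply_symm_apply, and_comm])).symm
  unfold unifExpect
  have hnum : (∑ s : Fin r → Fin (m + 1), (inversionCount (rttPerm (m + 1) r s) : ℝ))
      = ((m + 1).choose 2 : ℝ) * ((((m : ℝ) + 1) ^ r - ((m : ℝ) - 1) ^ r) / 2) := by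
    simp only [h1]
    rw [Finset.sum_comm]
    have h2 : ∀ p : Fin (m + 1) × Fin (m + 1),
        (∑ s : Fin r → Fin (m + 1),
            if p.1 < p.2 ∧ (rttPerm (m + 1) r s)⁻¹ p.2 < (rttPerm (m + 1) r s)⁻¹ p.1
            then (1 : ℝ) else 0)
        = if p.1 < p.2 then ((((m : ℝ) + 1) ^ r - ((m : ℝ) - 1) ^ r) / 2) else 0 := by
      intro p
      by_cases hp : p.1 < p.2
      · simp only [hp, true_and, if_true]
        exact sum_indicator_eq m p.1 p.2 hp r
      · simp [hp]
    rw [Finset.sum_congr rfl fun p _ => h2 p, ← Finset.sum_filter, Finset.sum_const,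
      card_pairs, nsmul_eq_mul]
  rw [hnum]
  have hcard : (Fintype.card (Fin r → Fin (m + 1)) : ℝ) = ((m : ℝ) + 1) ^ r := by simp
  rw [hcard]
  have hne : ((m : ℝ) + 1) ≠ 0 := by positivity
  have hne' : ((m : ℝ) + 1) ^ r ≠ 0 := pow_ne_zero _ hne
  push_cast
  rw [div_pow]
  field_simp
  ring_nf
end
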